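/- Let y solve the heat equation y_t − νΔy = f + u with y(0) = y₀ and homogeneous Dirichlet boundary conditions, and let p solve the adjoint equation −p_t − νΔp = y − y_d with p(T) = 0 and the same boundary conditions, and suppose αu + p = 0. Assuming sufficient regularity, y satisfies the fourth-order elliptic equation −y_tt + ν²Δ²y + (1/α)y = (1/α)y_d − f_t − νΔf a.e. in (0,T)×Ω, together with νΔy = −f on the boundary and (y_t − νΔy)(T) = f(T) in Ω. -/

import Mathlib

open MeasureTheory Set

/-- The (Euclidean) Laplacian of `f : ℝⁿ → ℝ`, as the trace of the second derivative. -/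
noncomputable def lap {n : ℕ} (f : EuclideanSpace ℝ (Fin n) → ℝ)
    (x : EuclideanSpace ℝ (Fin n)) : ℝ :=
  ∑ i : Fin n, iteratedFDeriv ℝ 2 f x ![EuclideanSpace.single i 1, EuclideanSpace.single i 1]

/-- Reformulation of the optimality system `(heat eq, adjoint eq, αu + p = 0)` as a
fourth-order in space / second-order in time elliptic equation for the state `y`,
together with the extra boundary condition `νΔy = −f` on `∂Ω` and the end-time
condition `(y_t − νΔy)(T) = f(T)`. -/
theorem stmt_13 {n : ℕ} (hn : 1 ≤ n) (hn3 : n ≤ 3)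
    (Ω : Set (EuclideanSpace ℝ (Fin n))) (hΩopen : IsOpen Ω)
    (hΩbdd : Bornology.IsBounded Ω)
    (T ν α : ℝ) (hT : 0 < T) (hν : 0 < ν) (hα : 0 < α)
    (y yt ytt p pt u ut f ft yd : ℝ → EuclideanSpace ℝ (Fin n) → ℝ)
    (y0 : EuclideanSpace ℝ (Fin n) → ℝ)
    -- the given fields are genuine time derivatives
    (hyt : ∀ t x, HasDerivAt (fun s => y s x) (yt t x) t)
    (hytt : ∀ t x, HasDerivAt (fun s => yt s x) (ytt t x) t)
    (hpt : ∀ t x, HasDerivAt (fun s => p s x) (pt t x) t)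
    (hut : ∀ t x, HasDerivAt (fun s => u s x) (ut t x) t)
    (hft : ∀ t x, HasDerivAt (fun s => f s x) (ft t x) t)
    -- regularity: time differentiation commutes with the Laplacian for `y`
    (hlapyt : ∀ t x, HasDerivAt (fun s => lap (y s) x) (lap (yt t) x) t)
    -- state equation `y_t − νΔy = f + u`, initial and boundary conditions
    (hstate : ∀ t ∈ Icc (0:ℝ) T, ∀ x ∈ closure Ω,
      yt t x - ν * lap (y t) x = f t x + u t x)
    (hy0 : ∀ x ∈ Ω, y 0 x = y0 x)
    (hybc : ∀ t ∈ Icc (0:ℝ) T, ∀ x ∈ frontier Ω, y t x = 0)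
    (hytbc : ∀ t ∈ Icc (0:ℝ) T, ∀ x ∈ frontier Ω, yt t x = 0)
    -- adjoint equation `−p_t − νΔp = y − y_d` with its end and boundary conditions
    (hadj : ∀ t ∈ Icc (0:ℝ) T, ∀ x ∈ closure Ω,
      -(pt t x) - ν * lap (p t) x = y t x - yd t x)
    (hpT : ∀ x, p T x = 0)
    (hpbc : ∀ t ∈ Icc (0:ℝ) T, ∀ x ∈ frontier Ω, p t x = 0)
    -- optimality condition `αu + p = 0`
    (hopt : ∀ t x, α * u t x + p t x = 0)
    -- regularity: the Laplacian may be applied to the optimality system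
    (hlapp : ∀ t x, lap (p t) x = -α * lap (u t) x)
    (hstatelap : ∀ t ∈ Icc (0:ℝ) T, ∀ x ∈ closure Ω,
      lap (yt t) x - ν * lap (fun z => lap (y t) z) x = lap (f t) x + lap (u t) x) :
    (∀ t ∈ Ioo (0:ℝ) T, ∀ x ∈ Ω,
      -(ytt t x) + ν^2 * lap (fun z => lap (y t) z) x + (1/α) * y t x
        = (1/α) * yd t x - ft t x - ν * lap (f t) x) ∧
    (∀ t ∈ Icc (0:ℝ) T, ∀ x ∈ frontier Ω, ν * lap (y t) x = -(f t x)) ∧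
    (∀ x ∈ Ω, yt T x - ν * lap (y T) x = f T x) := by
  refine ⟨?_, ?_, ?_⟩
  · intro t ht x hx
    have hxcl : x ∈ closure Ω := subset_closure hx
    -- differentiate the state equation in time
    have h1d : HasDerivAt (fun s => yt s x - ν * lap (y s) x - f s x - u s x)
        (ytt t x - ν * lap (yt t) x - ft t x - ut t x) t :=
      (((hytt t x).sub ((hlapyt t x).const_mul ν)).sub (hft t x)).sub (hut t x)
    have heq : (fun s => yt s x - ν * lap (y s) x - f s x - u s x) =ᶠ[nhds t]
        (fun _ => (0:ℝ)) := by
      filter_upwards [isOpen_Ioo.mem_nhds ht] with s hs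
      have := hstate s (Ioo_subset_Icc_self hs) x hxcl
      linarith
    have h10 : HasDerivAt (fun s => yt s x - ν * lap (y s) x - f s x - u s x) 0 t :=
      (hasDerivAt_const t (0:ℝ)).congr_of_eventuallyEq heq
    have h1 : ytt t x - ν * lap (yt t) x - ft t x - ut t x = 0 := h1d.unique h10
    -- differentiate the optimality condition in time
    have h2d : HasDerivAt (fun s => α * u s x + p s x) (α * ut t x + pt t x) t :=
      ((hut t x).const_mul α).add (hpt t x)
    have h2e : (fun s => α * u s x + p s x) = (fun _ => (0:ℝ)) := by
      funext s; exact hopt s x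
    have h2 : α * ut t x + pt t x = 0 := by
      refine h2d.unique ?_
      rw [h2e]; exact hasDerivAt_const t 0
    have h3 := hadj t (Ioo_subset_Icc_self ht) x hxcl
    have h4 := hlapp t x
    have h5 := hstatelap t (Ioo_subset_Icc_self ht) x hxcl
    have hα' : α ≠ 0 := ne_of_gt hα
    linear_combination (norm := (field_simp; ring)) (-1) * h1 + (-1/α) * h2 + (-1/α) * h3 + (-ν/α) * h4 + (-ν) * h5
  · intro t ht x hx
    have hxcl : x ∈ closure Ω := frontier_subset_closure hx
    have hs := hstate t ht x hxcl
    have hyt0 := hytbc t ht x hx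
    have hp0 := hpbc t ht x hx
    have hu0 : u t x = 0 := by
      have := hopt t x
      rw [hp0] at this
      have hα' : α ≠ 0 := ne_of_gt hα
      field_simp at this
      exact (mul_eq_zero.mp ((add_zero _).symm.trans this)).resolve_left hα'
    rw [hyt0, hu0] at hs
    linarith
  · intro x hx
    have hxcl : x ∈ closure Ω := subset_closure hx
    have hs := hstate T ⟨le_of_lt hT, le_refl T⟩ x hxcl
    have hu0 : u T x = 0 := by
      have := hopt T x
      rw [hpT x] at this
      have hα' : α ≠ 0 := ne_of_gt hα
      field_simp at this
      exact (mul_eq_zero.mp ((add_zero _).symm.trans this)).resolve_left hα'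
    rw [hu0] at hs
    linarith
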